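/- Let G be a finite simple graph with no induced cycle of length four, partitioned into sets I and J, such that for every j in J the set N(j) ∩ I is not a clique. Then for every j in J, the complement of the subgraph induced by N(j) ∩ I has exactly one component with more than one vertex. -/
import Mathlib

private lemma edge_in_comp {α : Type*} (H : SimpleGraph α) {x y : α} (hxy : x ≠ y)
    (h : H.connectedComponentMk x = H.connectedComponentMk y) : ∃ b, H.Adj x b := by
  obtain ⟨w⟩ := SimpleGraph.ConnectedComponent.exact h
  cases w with
  | nil => exact absurd rfl hxy
  | cons h' p => exact ⟨_, h'⟩

/-- In a graph with no induced four-cycle, partitioned into `I` and `J`,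
if for every `j ∈ J` the set `N(j) ∩ I` is not a clique, then the complement of the
subgraph induced on `N(j) ∩ I` has exactly one component with more than one vertex. -/
theorem stmt7 {V : Type*} [Fintype V] (G : SimpleGraph V)
    (hC4 : ¬ ∃ a b c d : V, a ≠ b ∧ a ≠ c ∧ a ≠ d ∧ b ≠ c ∧ b ≠ d ∧ c ≠ d ∧
      G.Adj a b ∧ G.Adj b c ∧ G.Adj c d ∧ G.Adj d a ∧ ¬G.Adj a c ∧ ¬G.Adj b d)
    (I J : Set V) (hpart : I ∪ J = Set.univ) (hdisj : Disjoint I J)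
    (hnc : ∀ j ∈ J, ¬G.IsClique (G.neighborSet j ∩ I)) :
    ∀ j ∈ J,
      ∃! c : (Gᶜ.induce (G.neighborSet j ∩ I)).ConnectedComponent,
        ∃ x y : (G.neighborSet j ∩ I : Set V), x ≠ y ∧
          (Gᶜ.induce (G.neighborSet j ∩ I)).connectedComponentMk x = c ∧
          (Gᶜ.induce (G.neighborSet j ∩ I)).connectedComponentMk y = c := by
  intro j hj
  classical
  set S : Set V := G.neighborSet j ∩ I with hSdef
  set H : SimpleGraph S := Gᶜ.induce S with hHdef
  have hadjH : ∀ p q : S, H.Adj p q ↔ (p : V) ≠ q ∧ ¬ G.Adj p q := by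
    intro p q
    simp [hHdef, SimpleGraph.compl_adj]
  -- existence
  have hnc' := hnc j hj
  rw [SimpleGraph.isClique_iff, Set.Pairwise] at hnc'
  push_neg at hnc'
  obtain ⟨x, hx, y, hy, hxy, hnadj⟩ := hnc'
  set x' : S := ⟨x, hx⟩
  set y' : S := ⟨y, hy⟩
  have hxy' : H.Adj x' y' := (hadjH x' y').2 ⟨hxy, hnadj⟩
  refine ⟨H.connectedComponentMk x', ⟨x', y', Subtype.coe_ne_coe.mp hxy, rfl,
    (SimpleGraph.ConnectedComponent.sound hxy'.reachable).symm⟩, ?_⟩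
  rintro c' ⟨u, v, huv, hu, hv⟩
  by_contra hne
  -- c' contains an edge
  obtain ⟨b, hub⟩ := edge_in_comp H huv (hu.trans hv.symm)
  -- cross pairs are G-adjacent
  have key : ∀ p q : S, H.connectedComponentMk p = H.connectedComponentMk x' →
      H.connectedComponentMk q = c' → (p : V) ≠ q ∧ G.Adj p q := by
    intro p q hp hq
    have hne' : p ≠ q := by
      rintro rfl
      exact hne (hq.symm.trans hp)
    have hnadjpq : ¬ H.Adj p q := by
      intro h
      exact hne ((hq.symm.trans (SimpleGraph.ConnectedComponent.sound h.reachable).symm).trans hp)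
    have : (p : V) ≠ q := Subtype.coe_ne_coe.mpr hne'
    refine ⟨this, ?_⟩
    by_contra hna
    exact hnadjpq ((hadjH p q).2 ⟨this, hna⟩)
  have hcx : H.connectedComponentMk x' = H.connectedComponentMk x' := rfl
  have hcy : H.connectedComponentMk y' = H.connectedComponentMk x' :=
    (SimpleGraph.ConnectedComponent.sound hxy'.reachable).symm
  have hcb : H.connectedComponentMk b = c' :=
    (SimpleGraph.ConnectedComponent.sound hub.reachable).symm.trans hu
  obtain ⟨hxu, hGxu⟩ := key x' u hcx hu
  obtain ⟨hxb, hGxb⟩ := key x' b hcx hcb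
  obtain ⟨hyu, hGyu⟩ := key y' u hcy hu
  obtain ⟨hyb, hGyb⟩ := key y' b hcy hcb
  have hGub : ¬ G.Adj u b := ((hadjH u b).1 hub).2
  have hub' : (u : V) ≠ b := ((hadjH u b).1 hub).1
  exact hC4 ⟨x, u, y, b, hxu, hxy, hxb, hyu.symm, hub', hyb, hGxu, hGyu.symm, hGyb,
    hGxb.symm, hnadj, hGub⟩
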